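/- Let d > 0, r > 0, δ ∈ (0,1), c > 2√(rd) and h > 0. Suppose π : ℝ → ℝ is twice differentiable, strictly decreasing, satisfies π(0) = (1−δ)/2, and solves the traveling-wave ODE −d·π''(ξ) − c·π'(ξ) = r·π(ξ)·(1 − δ − π(ξ)) for all ξ ∈ ℝ. Then the function π_h(ξ) = π(ξ) + hξ satisfies the differential inequality −d·π_h''(ξ) − c·π_h'(ξ) ≤ r·π_h(ξ)·(1 − δ − π_h(ξ)) for every ξ ∈ [−√(c/(rh)), √(c/(rh))]. -/

import Mathlib

open Real

/-- If `p` is a strictly decreasing traveling-wave profile of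
`∂ₜv - d∂ₓₓv = rv(1-δ-v)` with speed `c > 2√(rd)` and `p(0) = (1-δ)/2`, then the
tilted function `p + hξ` is a sub-solution on `[-√(c/(rh)), √(c/(rh))]`. -/
theorem pi_sub_solution
    (d r δ c h : ℝ) (hd : 0 < d) (hr : 0 < r)
    (hδ0 : 0 < δ) (hδ1 : δ < 1)
    (hc : 2 * Real.sqrt (r * d) < c) (hh : 0 < h)
    (p : ℝ → ℝ)
    (hp1 : ∀ ξ : ℝ, DifferentiableAt ℝ p ξ)
    (hp2 : ∀ ξ : ℝ, DifferentiableAt ℝ (deriv p) ξ)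
    (hanti : StrictAnti p)
    (hp0 : p 0 = (1 - δ) / 2)
    (hode : ∀ ξ : ℝ, -d * deriv (deriv p) ξ - c * deriv p ξ = r * p ξ * (1 - δ - p ξ)) :
    ∀ ξ : ℝ, -Real.sqrt (c / (r * h)) ≤ ξ → ξ ≤ Real.sqrt (c / (r * h)) →
      -d * deriv (deriv (fun y => p y + h * y)) ξ - c * deriv (fun y => p y + h * y) ξ ≤
        r * (p ξ + h * ξ) * (1 - δ - (p ξ + h * ξ)) := by
  intro ξ h1 h2
  have hc0 : 0 < c := lt_of_le_of_lt (by positivity) hc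
  have hder : deriv (fun y => p y + h * y) = fun y => deriv p y + h := by
    funext y
    rw [deriv_fun_add (hp1 y) (by fun_prop), deriv_const_mul _ differentiableAt_fun_id]
    simp
  have hder2 : deriv (deriv (fun y => p y + h * y)) ξ = deriv (deriv p) ξ := by
    rw [hder, deriv_fun_add (hp2 ξ) (differentiableAt_const h)]
    simp
  rw [hder2, hder]
  beta_reduce
  have hode' := hode ξ
  have hsq : r * h * ξ ^ 2 ≤ c := by
    have hnn : 0 ≤ c / (r * h) := by positivity
    have habs : |ξ| ≤ Real.sqrt (c / (r * h)) := abs_le.mpr ⟨h1, h2⟩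
    have hxs : ξ ^ 2 ≤ c / (r * h) := by
      nlinarith [sq_abs ξ, Real.sq_sqrt hnn, Real.sqrt_nonneg (c / (r * h)), abs_nonneg ξ]
    have hrh : 0 < r * h := mul_pos hr hh
    calc r * h * ξ ^ 2 ≤ r * h * (c / (r * h)) := by nlinarith
      _ = c := by field_simp
  have hsign : 0 ≤ r * ξ * (1 - δ - 2 * p ξ) := by
    rcases le_or_gt 0 ξ with hx | hx
    · rcases eq_or_lt_of_le hx with rfl | hx'
      · simp
      · have := hanti hx'
        rw [hp0] at this
        have h1 : 0 ≤ 1 - δ - 2 * p ξ := by linarith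
        positivity
    · have := hanti hx
      rw [hp0] at this
      nlinarith [mul_pos hr (mul_pos_of_neg_of_neg hx (show 1 - δ - 2 * p ξ < 0 by linarith))]
  nlinarith [mul_le_mul_of_nonneg_left hsq hh.le, mul_nonneg hh.le hsign, hode']
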